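/- Let N, M, d be natural numbers and let H i j, for ordered pairs i ≠ j in {1,2,3}, be channel matrices for the 3-user M×N MIMO interference channel. Assume that for every r ≥ 1 the cyclic alignment matrix A_r starting at receiver 1 has rank min(rN, (r+1)M). If a feasible alignment strategy with dimensions (d, d, d) exists, then for every natural number r ≥ 0, (2r+1)·d ≤ max(rN, (r+1)M). -/

import Mathlib

open Matrix Module Submodule
open Fin.NatCast

/-- The `rN × (r+1)M` block matrix whose `j`-th block row carries `B j` in block
column `j`, `C j` in block column `j+1`, and zero blocks elsewhere. -/
def alignBlock {r N M : ℕ} (B C : Fin r → Matrix (Fin N) (Fin M) ℂ) :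
    Matrix (Fin r × Fin N) (Fin (r + 1) × Fin M) ℂ :=
  Matrix.of fun p q =>
    if (q.1 : ℕ) = (p.1 : ℕ) then B p.1 p.2 q.2
    else if (q.1 : ℕ) = (p.1 : ℕ) + 1 then C p.1 p.2 q.2
    else 0

open Fin.NatCast in
/-- The cyclic alignment matrix `A_q` starting at receiver `i` (users labelled
`0,1,2` for the paper's `1,2,3`): block row `j` (0-based) carries the channel
from transmitter `i+j+1` to receiver `i+j` and the channel from transmitter
`i+j+2` to receiver `i+j`, indices mod 3. -/
def cyclicAlign {N M : ℕ} (H : Fin 3 → Fin 3 → Matrix (Fin N) (Fin M) ℂ)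
    (i : Fin 3) (q : ℕ) : Matrix (Fin q × Fin N) (Fin (q + 1) × Fin M) ℂ :=
  alignBlock
    (fun j => H (i + ((j : ℕ) : Fin 3)) (i + ((j : ℕ) : Fin 3) + 1))
    (fun j => H (i + ((j : ℕ) : Fin 3)) (i + ((j : ℕ) : Fin 3) + 2))

/-- A feasible vector-space interference-alignment strategy with dimensions
`d i` for the 3-user channel with matrices `H i j` (channel from transmitter
`j` to receiver `i`). -/
def Feasible {N M : ℕ} (H : Fin 3 → Fin 3 → Matrix (Fin N) (Fin M) ℂ)
    (d : Fin 3 → ℕ) : Prop :=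
  ∃ (U : Fin 3 → Submodule ℂ (Fin M → ℂ)) (V : Fin 3 → Submodule ℂ (Fin N → ℂ)),
    (∀ i, Module.finrank ℂ (U i) = d i) ∧
    (∀ i, Module.finrank ℂ (V i) = d i) ∧
    (∀ i j, i ≠ j → ∀ u ∈ U j, ∀ v ∈ V i, star v ⬝ᵥ (H i j).mulVec u = 0)


noncomputable section IAAux

/-- Currying as a linear equivalence. -/
def iaCurry (R ι κ : Type*) [CommSemiring R] : (ι × κ → R) ≃ₗ[R] (ι → κ → R) where
  toFun x i k := x (i, k)
  invFun y p := y p.1 p.2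
  map_add' _ _ := rfl
  map_smul' _ _ := rfl
  left_inv _ := rfl
  right_inv _ := rfl

/-- Pi submodule is equivalent to the pi of the submodules. -/
def iaPiEquiv {R : Type*} [CommSemiring R] {ι : Type*} {φ : ι → Type*}
    [∀ i, AddCommMonoid (φ i)] [∀ i, Module R (φ i)] (p : ∀ i, Submodule R (φ i)) :
    (Submodule.pi Set.univ p) ≃ₗ[R] (∀ i, p i) where
  toFun x i := ⟨x.1 i, x.2 i trivial⟩
  invFun v := ⟨fun i => (v i).1, fun i _ => (v i).2⟩
  map_add' _ _ := rfl
  map_smul' _ _ := rfl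
  left_inv _ := rfl
  right_inv _ := rfl

lemma ia_finrank_pi {ι : Type*} [Fintype ι] {κ : Type*} [Fintype κ]
    (p : ι → Submodule ℂ (κ → ℂ)) :
    finrank ℂ (Submodule.pi Set.univ p) = ∑ i, finrank ℂ (p i) := by
  rw [(iaPiEquiv p).finrank_eq, Module.finrank_pi_fintype]

lemma ia_finrank_comap {R M M₂ : Type*} [Ring R] [AddCommGroup M] [AddCommGroup M₂]
    [Module R M] [Module R M₂] (e : M ≃ₗ[R] M₂) (p : Submodule R M₂) :
    finrank R (p.comap (e : M →ₗ[R] M₂)) = finrank R p := by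
  rw [Submodule.comap_equiv_eq_map_symm]
  exact LinearEquiv.finrank_map_eq _ _

/-- The annihilator of `V` under the pairing `(v, w) ↦ star v ⬝ᵥ w`. -/
def iaPerp {n : ℕ} (V : Submodule ℂ (Fin n → ℂ)) : Submodule ℂ (Fin n → ℂ) where
  carrier := {w | ∀ v ∈ V, star v ⬝ᵥ w = 0}
  zero_mem' := by intro v _; simp
  add_mem' := by
    intro a b ha hb v hv
    rw [dotProduct_add, ha v hv, hb v hv, add_zero]
  smul_mem' := by
    intro c a ha v hv
    rw [dotProduct_smul, ha v hv, smul_zero]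

lemma iaPerp_mem {n : ℕ} {V : Submodule ℂ (Fin n → ℂ)} {w : Fin n → ℂ} :
    w ∈ iaPerp V ↔ ∀ v ∈ V, star v ⬝ᵥ w = 0 := Iff.rfl

lemma ia_finrank_perp {n : ℕ} (V : Submodule ℂ (Fin n → ℂ)) :
    finrank ℂ V + finrank ℂ (iaPerp V) = n := by
  classical
  let e : EuclideanSpace ℂ (Fin n) ≃ₗ[ℂ] (Fin n → ℂ) := WithLp.linearEquiv 2 ℂ (Fin n → ℂ)
  let K : Submodule ℂ (EuclideanSpace ℂ (Fin n)) := V.comap (e : _ →ₗ[ℂ] _)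
  have hinner : ∀ (u w : EuclideanSpace ℂ (Fin n)),
      (inner ℂ u w : ℂ) = star (e u) ⬝ᵥ (e w) := by
    intro u w
    simp [PiLp.inner_apply, dotProduct, RCLike.inner_apply, mul_comm, e]
  have hKperp : (Kᗮ).map (e : _ →ₗ[ℂ] _) = iaPerp V := by
    ext w
    simp only [Submodule.mem_map_equiv, Submodule.mem_orthogonal, iaPerp_mem]
    constructor
    · intro h v hv
      have := h (e.symm v) (by simpa [K] using hv)
      rwa [hinner, LinearEquiv.apply_symm_apply, LinearEquiv.apply_symm_apply] at this
    · intro h u hu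
      rw [hinner, LinearEquiv.apply_symm_apply]
      exact h (e u) hu
  have h1 : finrank ℂ K + finrank ℂ Kᗮ = n := by
    rw [Submodule.finrank_add_finrank_orthogonal K, finrank_euclideanSpace, Fintype.card_fin]
  have h2 : finrank ℂ K = finrank ℂ V := ia_finrank_comap e V
  have h3 : finrank ℂ (iaPerp V) = finrank ℂ Kᗮ := by
    rw [← hKperp]; exact (LinearEquiv.finrank_map_eq _ _)
  rw [← h2, h3]; exact h1

lemma ia_sum_double_ite {α β : Type*} [Fintype α] [DecidableEq α] [AddCommMonoid β]
    (a b : α) (hab : a ≠ b) (f g : α → β) :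
    ∑ k, (if k = a then f k else if k = b then g k else 0) = f a + g b := by
  classical
  have : ∀ k, (if k = a then f k else if k = b then g k else 0)
      = (if k = a then f k else 0) + (if k = b then g k else 0) := by
    intro k
    by_cases h1 : k = a
    · subst h1; simp [hab]
    · by_cases h2 : k = b
      · subst h2; simp [Ne.symm hab, h1]
      · simp [h1, h2]
  simp only [this, Finset.sum_add_distrib, Finset.sum_ite_eq', Finset.mem_univ, if_true]

lemma alignBlock_mulVecLin_apply {r N M : ℕ} (B C : Fin r → Matrix (Fin N) (Fin M) ℂ)
    (x : Fin (r + 1) × Fin M → ℂ) (j : Fin r) (n : Fin N) :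
    (alignBlock B C).mulVecLin x (j, n)
      = (B j).mulVec (fun m => x (j.castSucc, m)) n
        + (C j).mulVec (fun m => x (j.succ, m)) n := by
  classical
  have key : ∀ k : Fin (r + 1),
      (∑ m, (alignBlock B C) (j, n) (k, m) * x (k, m))
        = (if k = j.castSucc then (B j).mulVec (fun m => x (k, m)) n
           else if k = j.succ then (C j).mulVec (fun m => x (k, m)) n else 0) := by
    intro k
    by_cases h1 : k = j.castSucc
    · subst h1
      simp [alignBlock, Matrix.mulVec, dotProduct]
    · have h1' : (k : ℕ) ≠ (j : ℕ) := by
        intro h; exact h1 (Fin.ext (by simpa using h))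
      by_cases h2 : k = j.succ
      · subst h2
        simp [alignBlock, Matrix.mulVec, dotProduct, h1', if_neg h1]
      · have h2' : (k : ℕ) ≠ (j : ℕ) + 1 := by
          intro h; exact h2 (Fin.ext (by simpa using h))
        simp [alignBlock, h1', h2', if_neg h1, if_neg h2]
  have hexp : (alignBlock B C).mulVecLin x (j, n)
      = ∑ k : Fin (r + 1), ∑ m, (alignBlock B C) (j, n) (k, m) * x (k, m) := by
    simp [Matrix.mulVecLin_apply, Matrix.mulVec, dotProduct, Fintype.sum_prod_type]
  rw [hexp]
  simp only [key]
  exact ia_sum_double_ite _ _ (by simp [Fin.ext_iff]) _ _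

lemma ia_arith (r N M d e k : ℕ) (hde : d + e = N)
    (hk : k + min (r * N) ((r + 1) * M) = (r + 1) * M)
    (h : (r + 1) * d ≤ r * e + k) :
    (2 * r + 1) * d ≤ max (r * N) ((r + 1) * M) := by
  have h2 : r * d + r * e = r * N := by rw [← Nat.mul_add, hde]
  have hsplit : (2 * r + 1) * d = (r + 1) * d + r * d := by ring
  rcases le_total (r * N) ((r + 1) * M) with h1 | h1
  · rw [min_eq_left h1] at hk
    rw [max_eq_right h1, hsplit]
    calc (r + 1) * d + r * d ≤ (r * e + k) + r * d := Nat.add_le_add_right h _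
      _ = (r * d + r * e) + k := by ring
      _ = r * N + k := by rw [h2]
      _ = (r + 1) * M := by rw [Nat.add_comm]; exact hk
  · rw [min_eq_right h1] at hk
    have hk0 : k = 0 := Nat.add_right_cancel (hk.trans (Nat.zero_add _).symm)
    rw [max_eq_left h1, hsplit]
    calc (r + 1) * d + r * d ≤ (r * e + k) + r * d := Nat.add_le_add_right h _
      _ = (r * d + r * e) + k := by ring
      _ = r * N := by rw [h2, hk0, Nat.add_zero]

end IAAux

/-- necessity direction of Theorem 4, symmetric 3-user channel.
If every cyclic alignment matrix `A_r` starting at receiver 1 has full rank and a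
feasible strategy with dimensions `(d,d,d)` exists, then
`(2r+1)d ≤ max (rN) ((r+1)M)` for every `r ≥ 0`. -/


theorem three_user_symmetric_necessary
    (N M d : ℕ)
    (H : Fin 3 → Fin 3 → Matrix (Fin N) (Fin M) ℂ)
    (hrank : ∀ r : ℕ, 1 ≤ r →
      (cyclicAlign H 0 r).rank = min (r * N) ((r + 1) * M))
    (hfeas : Feasible H (fun _ => d)) :
    ∀ r : ℕ, (2 * r + 1) * d ≤ max (r * N) ((r + 1) * M) := by
  classical
  obtain ⟨U, V, hU, hV, horth⟩ := hfeas
  have hU' : ∀ i, finrank ℂ (U i) = d := fun i => hU i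
  have hV' : ∀ i, finrank ℂ (V i) = d := fun i => hV i
  have hdM : d ≤ M := by
    have h := Submodule.finrank_le (U 0)
    rwa [hU' 0, Module.finrank_fintype_fun_eq_card, Fintype.card_fin] at h
  have hdN : d ≤ N := by
    have h := Submodule.finrank_le (V 0)
    rwa [hV' 0, Module.finrank_fintype_fun_eq_card, Fintype.card_fin] at h
  have ne1 : ∀ a : Fin 3, a ≠ a + 1 := by decide
  have ne2 : ∀ a : Fin 3, a ≠ a + 2 := by decide
  intro r
  rcases Nat.eq_zero_or_pos r with rfl | hr
  · calc (2 * 0 + 1) * d = d := by ring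
      _ ≤ M := hdM
      _ ≤ max (0 * N) ((0 + 1) * M) := by simp
  · -- notation
    set B : Fin r → Matrix (Fin N) (Fin M) ℂ :=
      fun j => H ((j : ℕ) : Fin 3) (((j : ℕ) : Fin 3) + 1) with hB
    set C : Fin r → Matrix (Fin N) (Fin M) ℂ :=
      fun j => H ((j : ℕ) : Fin 3) (((j : ℕ) : Fin 3) + 2) with hC
    have hA : cyclicAlign H 0 r = alignBlock B C := by
      simp only [cyclicAlign, hB, hC, zero_add]
    set f : (Fin (r + 1) × Fin M → ℂ) →ₗ[ℂ] (Fin r × Fin N → ℂ) :=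
      (alignBlock B C).mulVecLin with hf
    set U' : Fin (r + 1) → Submodule ℂ (Fin M → ℂ) :=
      fun k => U (((k : ℕ) : Fin 3) + 1) with hU'def
    set W : Submodule ℂ (Fin (r + 1) × Fin M → ℂ) :=
      (Submodule.pi Set.univ U').comap
        (iaCurry ℂ (Fin (r + 1)) (Fin M) : _ →ₗ[ℂ] _) with hWdef
    set Zp : Fin r → Submodule ℂ (Fin N → ℂ) :=
      fun j => iaPerp (V ((j : ℕ) : Fin 3)) with hZpdef
    set Z : Submodule ℂ (Fin r × Fin N → ℂ) :=
      (Submodule.pi Set.univ Zp).comap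
        (iaCurry ℂ (Fin r) (Fin N) : _ →ₗ[ℂ] _) with hZdef
    have hWrank : finrank ℂ W = (r + 1) * d := by
      rw [hWdef, ia_finrank_comap, ia_finrank_pi]
      simp [U', hU']
    have hZrank : finrank ℂ Z = r * (N - d) := by
      rw [hZdef, ia_finrank_comap, ia_finrank_pi]
      have hperp : ∀ j : Fin r, finrank ℂ (iaPerp (V ((j : ℕ) : Fin 3))) = N - d := by
        intro j
        have h := ia_finrank_perp (V ((j : ℕ) : Fin 3))
        rw [hV'] at h
        omega
      simp [Zp, hperp]
    have hmaple : W.map f ≤ Z := by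
      rintro y ⟨x, hx, rfl⟩
      intro j _
      intro v hv
      have hx1 : (fun m => x (j.castSucc, m)) ∈ U (((j : ℕ) : Fin 3) + 1) := by
        have h := hx j.castSucc trivial
        simpa [U', Fin.coe_castSucc] using (show (fun m => x (j.castSucc, m)) ∈ U' j.castSucc from h)
      have hx2 : (fun m => x (j.succ, m)) ∈ U (((j : ℕ) : Fin 3) + 2) := by
        have h : (fun m => x (j.succ, m)) ∈ U (((j.succ : ℕ) : Fin 3) + 1) :=
          hx j.succ trivial
        have hcast : (((j.succ : ℕ) : Fin 3) + 1) = ((j : ℕ) : Fin 3) + 2 := by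
          simp only [Fin.val_succ]
          push_cast
          rw [add_assoc, one_add_one_eq_two]
        rwa [hcast] at h
      have hcur : (iaCurry ℂ (Fin r) (Fin N)) (f x) j = fun n => f x (j, n) := rfl
      show star v ⬝ᵥ ((iaCurry ℂ (Fin r) (Fin N)) (f x) j) = 0
      rw [hcur]
      have hexp : (fun n => f x (j, n))
          = (B j).mulVec (fun m => x (j.castSucc, m))
            + (C j).mulVec (fun m => x (j.succ, m)) :=
        funext fun n => alignBlock_mulVecLin_apply B C x j n
      rw [hexp, dotProduct_add, hB, hC]
      rw [horth _ _ (ne1 _) _ hx1 v hv, horth _ _ (ne2 _) _ hx2 v hv, add_zero]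
    have hfin1 : finrank ℂ (W.map f) + finrank ℂ (LinearMap.ker (f.domRestrict W))
        = (r + 1) * d := by
      rw [← hWrank, ← LinearMap.range_domRestrict W f]
      exact LinearMap.finrank_range_add_finrank_ker _
    have hkerle : finrank ℂ (LinearMap.ker (f.domRestrict W))
        ≤ finrank ℂ (LinearMap.ker f) := by
      have ginj : Function.Injective
          (W.subtype.comp (LinearMap.ker (f.domRestrict W)).subtype) :=
        W.injective_subtype.comp (Submodule.injective_subtype _)
      refine LinearMap.finrank_le_finrank_of_injective
        (f := LinearMap.codRestrict (LinearMap.ker f)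
          (W.subtype.comp (LinearMap.ker (f.domRestrict W)).subtype) ?_) ?_
      · intro c
        have hc := c.2
        rw [LinearMap.mem_ker] at hc ⊢
        exact hc
      · intro a b hab
        have h' := congrArg
          (Subtype.val : LinearMap.ker f → (Fin (r + 1) × Fin M → ℂ)) hab
        exact ginj h'
    have hWle : finrank ℂ (W.map f) ≤ finrank ℂ Z := Submodule.finrank_mono hmaple
    have hker : finrank ℂ (LinearMap.ker f) + min (r * N) ((r + 1) * M)
        = (r + 1) * M := by
      have h1 := LinearMap.finrank_range_add_finrank_ker f
      have h2 : finrank ℂ (LinearMap.range f) = min (r * N) ((r + 1) * M) := by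
        have h3 : (alignBlock B C).rank = min (r * N) ((r + 1) * M) := by
          rw [← hA]; exact hrank r hr
        exact h3
      have h4 : finrank ℂ (Fin (r + 1) × Fin M → ℂ) = (r + 1) * M := by
        rw [Module.finrank_fintype_fun_eq_card, Fintype.card_prod,
          Fintype.card_fin, Fintype.card_fin]
      rw [h2, h4] at h1
      rw [Nat.add_comm]
      exact h1
    have hmain : (r + 1) * d ≤ r * (N - d) + finrank ℂ (LinearMap.ker f) := by
      calc (r + 1) * d
          = finrank ℂ (W.map f) + finrank ℂ (LinearMap.ker (f.domRestrict W)) := hfin1.symm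
        _ ≤ finrank ℂ Z + finrank ℂ (LinearMap.ker f) := Nat.add_le_add hWle hkerle
        _ = r * (N - d) + finrank ℂ (LinearMap.ker f) := by rw [hZrank]
    exact ia_arith r N M d (N - d) (finrank ℂ (LinearMap.ker f)) (by omega) hker hmain
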